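/- arXiv:1610.05294 — 3 statements merged into one kernel-verified Lean document; each statement's English description precedes it below -/
import Mathlib

section
/- Let (X, 𝔅, μ) be a probability space, T : X → X a measurable map preserving μ, and φ : X → ℝ a μ-integrable function such that the Birkhoff sums S_n φ(x) = Σ_{j=0}^{n-1} φ(T^j x) tend to +∞ as n → ∞ for μ-almost every x. Then ∫ φ dμ > 0. -/
open MeasureTheory Filter Set Function
open scoped ENNReal

lemma sum_if_antitone (a : ℕ → ℝ) (P : ℕ → Prop) [DecidablePred P]
    (hanti : ∀ i j, i ≤ j → P j → P i) (h0 : P 0) (N : ℕ) :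
    ∃ m, 1 ≤ m ∧ m ≤ N + 1 ∧
      (∑ j ∈ Finset.range (N + 1), if P j then a j else 0) = ∑ j ∈ Finset.range m, a j := by
  by_cases hall : ∀ j < N + 1, P j
  · refine ⟨N + 1, Nat.succ_le_succ (Nat.zero_le _), le_rfl, ?_⟩
    exact Finset.sum_congr rfl fun j hj => if_pos (hall j (Finset.mem_range.1 hj))
  · push_neg at hall
    obtain ⟨j₀, hj₀N, hj₀⟩ := hall
    have hex : ∃ j, ¬ P j := ⟨j₀, hj₀⟩
    set m := Nat.find hex with hm
    have hmP : ¬ P m := Nat.find_spec hex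
    have hm1 : 1 ≤ m := by
      rcases Nat.eq_zero_or_pos m with h | h
      · exact absurd (h ▸ h0) hmP
      · exact h
    have hmN : m ≤ N + 1 := le_trans (Nat.find_min' hex hj₀) (Nat.le_of_lt hj₀N)
    refine ⟨m, hm1, hmN, ?_⟩
    rw [Finset.range_eq_Ico, ← Finset.sum_Ico_consecutive _ (Nat.zero_le m) hmN]
    have h1 : (∑ j ∈ Finset.Ico 0 m, if P j then a j else 0) = ∑ j ∈ Finset.Ico 0 m, a j := by
      refine Finset.sum_congr rfl fun j hj => ?_
      have : P j := by
        by_contra hPj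
        exact absurd (Nat.find_min' hex hPj) (not_le.2 (Finset.mem_Ico.1 hj).2)
      rw [if_pos this]
    have h2 : (∑ j ∈ Finset.Ico m (N + 1), if P j then a j else 0) = 0 := by
      refine Finset.sum_eq_zero fun j hj => ?_
      have : ¬ P j := fun hPj => hmP (hanti m j (Finset.mem_Ico.1 hj).1 hPj)
      rw [if_neg this]
    rw [h1, h2, add_zero, ← Finset.range_eq_Ico]

theorem stmt_1_aux {X : Type*} [MeasurableSpace X] (μ : Measure X) [IsProbabilityMeasure μ]
    (T : X → X) (hT : MeasurePreserving T μ μ)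
    (φ : X → ℝ) (hφ : Integrable φ μ) (hφm : Measurable φ)
    (h : ∀ᵐ x ∂μ, Tendsto (fun n => ∑ j ∈ Finset.range n, φ (T^[j] x)) atTop atTop) :
    0 < ∫ x, φ x ∂μ := by
  classical
  set S : ℕ → X → ℝ := fun n x => ∑ j ∈ Finset.range n, φ (T^[j] x) with hS
  have hTend : ∀ᵐ x ∂μ, Tendsto (fun n => S n x) atTop atTop := h
  have hSadd : ∀ k n x, S (k + n) x = S k x + S n (T^[k] x) := fun k n x =>
    birkhoffSum_add T φ k n x
  have hS0 : ∀ x, S 0 x = 0 := fun x => by simp [hS]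
  have hSmeas : ∀ n, Measurable (S n) := fun n =>
    Finset.measurable_sum _ fun j _ => hφm.comp (hT.measurable.iterate j)
  -- the set of points with all Birkhoff sums positive
  set A : Set X := {x | ∀ n, 1 ≤ n → 0 < S n x} with hA
  have hAmeas : MeasurableSet A := by
    have : A = ⋂ (n : ℕ) (_ : 1 ≤ n), (S n) ⁻¹' (Ioi 0) := by
      ext x; simp [hA, mem_iInter, mem_preimage, mem_Ioi]
    rw [this]
    exact MeasurableSet.iInter fun n => MeasurableSet.iInter fun _ =>
      (hSmeas n) measurableSet_Ioi
  -- pointwise: from a point whose Birkhoff sums tend to infinity, the orbit enters A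
  have enterA : ∀ x, Tendsto (fun n => S n x) atTop atTop → ∃ k, T^[k] x ∈ A := by
    intro x hx
    obtain ⟨N₁, hN₁⟩ := eventually_atTop.1 (hx.eventually_ge_atTop 1)
    obtain ⟨k₀, hk₀mem, hk₀min⟩ := Finset.exists_min_image (Finset.range (N₁ + 1))
      (fun j => S j x) ⟨0, by simp⟩
    set c := S k₀ x with hc
    have hc0 : c ≤ 0 := by
      have := hk₀min 0 (by simp)
      rwa [hS0] at this
    have hglobal : ∀ j, c ≤ S j x := by
      intro j
      by_cases hj : j < N₁ + 1
      · exact hk₀min j (Finset.mem_range.2 hj)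
      · have : 1 ≤ S j x := hN₁ j (by omega)
        linarith
    set P : ℕ → Prop := fun m => S m x ≤ c with hP
    set k := Nat.findGreatest P N₁ with hk
    have hk₀N₁ : k₀ ≤ N₁ := by
      have := Finset.mem_range.1 hk₀mem; omega
    have hkP : P k := Nat.findGreatest_spec hk₀N₁ (le_rfl : S k₀ x ≤ c)
    have hkc : S k x = c := le_antisymm hkP (hglobal k)
    refine ⟨k, fun n hn => ?_⟩
    have hkn : c < S (k + n) x := by
      rcases lt_or_ge c (S (k + n) x) with h' | h'
      · exact h'
      · exfalso
        have hPkn : P (k + n) := h'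
        by_cases hle : k + n ≤ N₁
        · exact Nat.findGreatest_is_greatest (by omega) hle hPkn
        · have : 1 ≤ S (k + n) x := hN₁ (k + n) (by omega)
          have : (1 : ℝ) ≤ c := le_trans this h'
          linarith
    have heq : S n (T^[k] x) = S (k + n) x - S k x := by
      rw [hSadd k n x]; ring
    rw [heq, hkc]; linarith
  -- pointwise: a point of A with sums tending to infinity has sums uniformly bounded below
  set Bs : ℕ → Set X := fun m => {x | ∀ n, 1 ≤ n → 1 / (m + 1 : ℝ) ≤ S n x} with hBs
  have hBsmeas : ∀ m, MeasurableSet (Bs m) := by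
    intro m
    have : Bs m = ⋂ (n : ℕ) (_ : 1 ≤ n), (S n) ⁻¹' (Ici (1 / (m + 1 : ℝ))) := by
      ext x; simp [hBs, mem_iInter, mem_preimage, mem_Ici]
    rw [this]
    exact MeasurableSet.iInter fun n => MeasurableSet.iInter fun _ =>
      (hSmeas n) measurableSet_Ici
  have hBsA : ∀ m, Bs m ⊆ A := by
    intro m x hx n hn
    have h1 : (0 : ℝ) < 1 / (m + 1 : ℝ) := by positivity
    exact lt_of_lt_of_le h1 (hx n hn)
  have intoB : ∀ x, x ∈ A → Tendsto (fun n => S n x) atTop atTop → ∃ m, x ∈ Bs m := by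
    intro x hxA hx
    obtain ⟨N₂, hN₂⟩ := eventually_atTop.1 (hx.eventually_ge_atTop 1)
    obtain ⟨k₀, hk₀mem, hk₀min⟩ := Finset.exists_min_image (Finset.Icc 1 (N₂ + 1))
      (fun j => S j x) ⟨1, by simp⟩
    have hδpos : 0 < S k₀ x := hxA k₀ (Finset.mem_Icc.1 hk₀mem).1
    obtain ⟨m, hm⟩ := exists_nat_one_div_lt (lt_min hδpos one_pos)
    refine ⟨m, fun n hn => ?_⟩
    by_cases hcase : n ≤ N₂ + 1
    · have := hk₀min n (Finset.mem_Icc.2 ⟨hn, hcase⟩)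
      have h2 : 1 / (m + 1 : ℝ) < S k₀ x := lt_of_lt_of_le hm (min_le_left _ _)
      linarith
    · have h1 : 1 ≤ S n x := hN₂ n (by omega)
      have h2 : 1 / (m + 1 : ℝ) < 1 := lt_of_lt_of_le hm (min_le_right _ _)
      linarith
  -- a set Bs m of positive measure exists
  have hBpos : ∃ m, 0 < μ (Bs m) := by
    by_contra hcon
    push_neg at hcon
    have hzero : ∀ m, μ (Bs m) = 0 := fun m => le_antisymm (hcon m) zero_le
    have hU : μ (⋃ (k : ℕ) (m : ℕ), T^[k] ⁻¹' (Bs m)) = 0 := by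
      refine measure_iUnion_null fun k => measure_iUnion_null fun m => ?_
      rw [(hT.iterate k).measure_preimage (hBsmeas m).nullMeasurableSet]
      exact hzero m
    have hcov : ∀ᵐ x ∂μ, x ∈ ⋃ (k : ℕ) (m : ℕ), T^[k] ⁻¹' (Bs m) := by
      filter_upwards [hTend] with x hx
      obtain ⟨k, hk⟩ := enterA x hx
      have h1 : Tendsto (fun n => S (k + n) x) atTop atTop := by
        have h2 : Tendsto (fun n : ℕ => k + n) atTop atTop := (tendsto_add_atTop_nat k).congr (fun n => Nat.add_comm n k)
        exact hx.comp h2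
      have hxTk : Tendsto (fun n => S n (T^[k] x)) atTop atTop := by
        have heq : (fun n => S n (T^[k] x)) = fun n => S (k + n) x + (-(S k x)) := by
          funext n; rw [hSadd k n x]; ring
        rw [heq]
        exact tendsto_atTop_add_const_right atTop _ h1
      obtain ⟨m, hm⟩ := intoB (T^[k] x) hk hxTk
      exact mem_iUnion.2 ⟨k, mem_iUnion.2 ⟨m, hm⟩⟩
    set U : Set X := ⋃ (k : ℕ) (m : ℕ), T^[k] ⁻¹' (Bs m) with hUdef
    have hUc : μ Uᶜ = 0 := by
      have h0 := ae_iff.1 hcov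
      have : Uᶜ = {x | x ∉ U} := rfl
      rw [this]
      exact h0
    have hcontra : (1 : ℝ≥0∞) ≤ 0 := by
      calc (1 : ℝ≥0∞) = μ univ := measure_univ.symm
        _ = μ (U ∪ Uᶜ) := by rw [union_compl_self]
        _ ≤ μ U + μ Uᶜ := measure_union_le _ _
        _ = 0 := by rw [hU, hUc, add_zero]
    exact absurd hcontra (by simp)
  obtain ⟨mB, hmB⟩ := hBpos
  set B : Set X := Bs mB with hBdef
  set c : ℝ := 1 / (mB + 1 : ℝ) with hcdef
  have hcpos : 0 < c := by positivity
  have hBA : B ⊆ A := hBsA mB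
  have hBc : ∀ x ∈ B, ∀ n, 1 ≤ n → c ≤ S n x := fun x hx n hn => hx n hn
  -- the sets of no-entry times, and the building blocks of the Kac identity
  set D : ℕ → Set X := fun n => {x | ∀ i, 1 ≤ i → i ≤ n → T^[i] x ∉ A} with hD
  have hDmeas : ∀ n, MeasurableSet (D n) := by
    intro n
    have : D n = ⋂ (i : ℕ) (_ : 1 ≤ i) (_ : i ≤ n), (T^[i]) ⁻¹' Aᶜ := by
      ext x; simp [hD, mem_iInter, mem_preimage]
    rw [this]
    exact MeasurableSet.iInter fun i => MeasurableSet.iInter fun _ =>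
      MeasurableSet.iInter fun _ => (hT.measurable.iterate i) hAmeas.compl
  have hDanti : ∀ i j, i ≤ j → D j ⊆ D i := by
    intro i j hij x hx i' h1 h2
    exact hx i' h1 (le_trans h2 hij)
  have hD0 : ∀ x, x ∈ D 0 := fun x i h1 h2 => absurd (le_trans h1 h2) (by omega)
  set C : ℕ → Set X := fun n => Aᶜ ∩ D n with hC
  have hCmeas : ∀ n, MeasurableSet (C n) := fun n => hAmeas.compl.inter (hDmeas n)
  have hCanti : Antitone C := fun i j hij =>
    inter_subset_inter (le_refl _) (hDanti i j hij)
  set f : ℕ → X → ℝ := fun n => (D n).indicator (fun x => φ (T^[n] x)) with hf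
  set e : ℕ → X → ℝ := fun n => (C n).indicator (fun x => φ (T^[n] x)) with he
  set F : ℕ → X → ℝ := fun N x => ∑ j ∈ Finset.range N, f j x with hF
  set G : ℕ → X → ℝ := fun N x => ∑ j ∈ Finset.range N, e j x with hG
  -- membership transfer
  have hDC : ∀ j x, x ∈ D (j + 1) ↔ T x ∈ C j := by
    intro j x
    constructor
    · intro hx
      refine ⟨by simpa using hx 1 le_rfl (by omega), fun i h1 h2 => ?_⟩
      have := hx (i + 1) (by omega) (by omega)
      rwa [iterate_succ_apply] at this
    · rintro ⟨h1, h2⟩ i hi1 hij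
      rcases Nat.exists_eq_add_of_le hi1 with ⟨i', rfl⟩
      rcases Nat.eq_zero_or_pos i' with h | h
      · subst h; simpa using h1
      · have := h2 i' h (by omega)
        rw [← iterate_succ_apply] at this
        rw [Nat.add_comm]
        exact this
  have hfe : ∀ j x, f (j + 1) x = e j (T x) := by
    intro j x
    by_cases hx : x ∈ D (j + 1)
    · simp only [hf, he]
      rw [indicator_of_mem hx, indicator_of_mem ((hDC j x).1 hx), iterate_succ_apply]
    · simp only [hf, he]
      rw [indicator_of_notMem hx,
        indicator_of_notMem (fun hc => hx ((hDC j x).2 hc))]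
  have hf0 : ∀ x, f 0 x = φ x := by
    intro x
    simp only [hf]
    rw [indicator_of_mem (hD0 x)]
    simp
  -- integrability
  have hint_j : ∀ j : ℕ, Integrable (fun x => φ (T^[j] x)) μ := by
    intro j
    have h1 : Integrable φ (Measure.map T^[j] μ) := by rwa [(hT.iterate j).map_eq]
    exact h1.comp_measurable (hT.measurable.iterate j)
  have hintf : ∀ j, Integrable (f j) μ := fun j => (hint_j j).indicator (hDmeas j)
  have hinte : ∀ j, Integrable (e j) μ := fun j => (hint_j j).indicator (hCmeas j)
  have hintF : ∀ N, Integrable (F N) μ := fun N => integrable_finset_sum _ (fun j _ => hintf j)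
  have hintG : ∀ N, Integrable (G N) μ := fun N => integrable_finset_sum _ (fun j _ => hinte j)
  have hintAF : ∀ N, Integrable (A.indicator (F N)) μ := fun N => (hintF N).indicator hAmeas
  have hemeas : ∀ j, Measurable (e j) := fun j =>
    ((hφm.comp (hT.measurable.iterate j)).indicator (hCmeas j))
  have hGmeas : ∀ N, Measurable (G N) := fun N =>
    Finset.measurable_sum _ (fun j _ => hemeas j)
  -- composition invariance of integrals
  have hcompT : ∀ N, ∫ x, G N (T x) ∂μ = ∫ x, G N x ∂μ := by
    intro N
    have h1 := integral_map (μ := μ) hT.aemeasurable (f := G N)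
      ((hGmeas N).aestronglyMeasurable)
    rw [hT.map_eq] at h1
    exact h1.symm
  have hintGT : ∀ N, Integrable (fun x => G N (T x)) μ := by
    intro N
    have h1 : Integrable (G N) (Measure.map T μ) := by rw [hT.map_eq]; exact hintG N
    exact h1.comp_measurable hT.measurable
  -- first identity: F (n+1) x = φ x + G n (T x)
  have hpt1 : ∀ n x, F (n + 1) x = φ x + G n (T x) := by
    intro n x
    simp only [hF, hG]
    rw [Finset.sum_range_succ']
    rw [hf0]
    rw [add_comm]
    congr 1
    exact Finset.sum_congr rfl fun j _ => hfe j x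
  -- second identity: F (n+1) x = A.indicator (F (n+1)) x + G (n+1) x
  have hpt2 : ∀ n x, F (n + 1) x = A.indicator (F (n + 1)) x + G (n + 1) x := by
    intro n x
    by_cases hx : x ∈ A
    · rw [indicator_of_mem hx]
      have : G (n + 1) x = 0 := by
        simp only [hG, he]
        refine Finset.sum_eq_zero fun j _ => ?_
        exact indicator_of_notMem (show x ∉ C j from fun hc => hc.1 hx) (fun x => φ (T^[j] x))
      rw [this, add_zero]
    · rw [indicator_of_notMem hx, zero_add, hF, hG]
      refine Finset.sum_congr rfl fun j _ => ?_
      by_cases hxD : x ∈ D j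
      · simp only [hf, he]
        rw [indicator_of_mem hxD]
        exact (indicator_of_mem (show x ∈ C j from ⟨hx, hxD⟩) (fun x => φ (T^[j] x))).symm
      · simp only [hf, he]
        rw [indicator_of_notMem hxD]
        exact (indicator_of_notMem (show x ∉ C j from fun hc => hxD hc.2) (fun x => φ (T^[j] x))).symm
  -- the key integral identity
  have hkey : ∀ n, ∫ x, φ x ∂μ = (∫ x, A.indicator (F (n + 1)) x ∂μ) + ∫ x, e n x ∂μ := by
    intro n
    have h1 : ∫ x, F (n + 1) x ∂μ = (∫ x, φ x ∂μ) + ∫ x, G n x ∂μ := by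
      calc ∫ x, F (n + 1) x ∂μ = ∫ x, (φ x + G n (T x)) ∂μ :=
            integral_congr_ae (Filter.Eventually.of_forall fun x => hpt1 n x)
        _ = (∫ x, φ x ∂μ) + ∫ x, G n (T x) ∂μ := integral_add hφ (hintGT n)
        _ = (∫ x, φ x ∂μ) + ∫ x, G n x ∂μ := by rw [hcompT n]
    have h2 : ∫ x, F (n + 1) x ∂μ
        = (∫ x, A.indicator (F (n + 1)) x ∂μ) + ∫ x, G (n + 1) x ∂μ := by
      calc ∫ x, F (n + 1) x ∂μ = ∫ x, (A.indicator (F (n + 1)) x + G (n + 1) x) ∂μ :=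
            integral_congr_ae (Filter.Eventually.of_forall fun x => hpt2 n x)
        _ = _ := integral_add (hintAF (n + 1)) (hintG (n + 1))
    have h3 : ∫ x, G (n + 1) x ∂μ = (∫ x, G n x ∂μ) + ∫ x, e n x ∂μ := by
      calc ∫ x, G (n + 1) x ∂μ = ∫ x, (G n x + e n x) ∂μ := by
            refine integral_congr_ae (Filter.Eventually.of_forall fun x => ?_)
            rw [hG]; exact Finset.sum_range_succ _ n
        _ = _ := integral_add (hintG n) (hinte n)
    rw [h2, h3] at h1
    linarith
  -- F (n+1) equals some Birkhoff sum S m with 1 ≤ m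
  have hFS : ∀ n x, ∃ m, 1 ≤ m ∧ m ≤ n + 1 ∧ F (n + 1) x = S m x := by
    intro n x
    obtain ⟨m, h1, h2, h3⟩ := sum_if_antitone (fun j => φ (T^[j] x)) (fun j => x ∈ D j)
      (fun i j hij hj => hDanti i j hij hj) (hD0 x) n
    refine ⟨m, h1, h2, ?_⟩
    have h4 : F (n + 1) x = ∑ j ∈ Finset.range (n + 1), if x ∈ D j then φ (T^[j] x) else 0 := by
      simp only [hF, hf]
      refine Finset.sum_congr rfl fun j _ => ?_
      by_cases hxD : x ∈ D j
      · rw [indicator_of_mem hxD, if_pos hxD]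
      · rw [indicator_of_notMem hxD, if_neg hxD]
    rw [h4, h3]
  -- lower bound for the main term
  have hlow : ∀ n, c * (μ B).toReal ≤ ∫ x, A.indicator (F (n + 1)) x ∂μ := by
    intro n
    have hpt : ∀ x, B.indicator (fun _ => c) x ≤ A.indicator (F (n + 1)) x := by
      intro x
      by_cases hxB : x ∈ B
      · have hxA : x ∈ A := hBA hxB
        obtain ⟨m, hm1, _, hmS⟩ := hFS n x
        rw [indicator_of_mem hxB, indicator_of_mem hxA, hmS]
        exact hBc x hxB m hm1
      · rw [indicator_of_notMem hxB]
        by_cases hxA : x ∈ A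
        · obtain ⟨m, hm1, _, hmS⟩ := hFS n x
          rw [indicator_of_mem hxA, hmS]
          exact le_of_lt (hxA m hm1)
        · rw [indicator_of_notMem hxA]
    have hint1 : Integrable (B.indicator (fun _ => c)) μ :=
      (integrable_const c).indicator (hBsmeas mB)
    have hmono := integral_mono hint1 (hintAF (n + 1)) hpt
    calc c * (μ B).toReal = ∫ x, B.indicator (fun _ => c) x ∂μ := by
          rw [integral_indicator_const c (hBsmeas mB), smul_eq_mul, mul_comm]; rfl
      _ ≤ _ := hmono
  -- the measure of C n tends to zero
  have hC0 : Tendsto (fun n => μ (C n)) atTop (nhds 0) := by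
    have hnull : μ (⋂ n, C n) = 0 := by
      have hbad : μ {x | ¬ Tendsto (fun n => S n x) atTop atTop} = 0 := ae_iff.1 hTend
      refine measure_mono_null ?_ hbad
      intro x hx
      simp only [mem_iInter] at hx
      intro hxT
      obtain ⟨k, hk⟩ := enterA x hxT
      rcases Nat.eq_zero_or_pos k with hk0 | hk1
      · subst hk0
        exact (hx 0).1 (by simpa using hk)
      · exact ((hx k).2 k hk1 le_rfl) hk
    have h1 := tendsto_measure_iInter_atTop (μ := μ) (fun n => (hCmeas n).nullMeasurableSet)
      hCanti ⟨0, measure_ne_top μ _⟩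
    rw [hnull] at h1
    exact h1
  have hC0' : Tendsto (fun n => (μ (C n)).toReal) atTop (nhds 0) := by
    have h1 := (ENNReal.tendsto_toReal (by simp : (0 : ℝ≥0∞) ≠ ⊤)).comp hC0
    exact h1
  -- truncation functions
  set ψ : ℕ → X → ℝ := fun K x => if (K : ℝ) < |φ x| then |φ x| else 0 with hψdef
  have hψmeas : ∀ K, Measurable (ψ K) := fun K =>
    Measurable.ite (measurableSet_lt measurable_const hφm.abs) hφm.abs measurable_const
  have hψnonneg : ∀ K x, 0 ≤ ψ K x := by
    intro K x
    simp only [hψdef]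
    split
    · exact abs_nonneg _
    · exact le_rfl
  have hψle : ∀ K x, ψ K x ≤ |φ x| := by
    intro K x
    simp only [hψdef]
    split
    · exact le_rfl
    · exact abs_nonneg _
  have hψint : ∀ K, Integrable (ψ K) μ := by
    intro K
    refine (hφ.abs).mono ((hψmeas K).aestronglyMeasurable)
      (Filter.Eventually.of_forall fun x => ?_)
    rw [Real.norm_eq_abs, Real.norm_eq_abs, abs_of_nonneg (hψnonneg K x), abs_abs]
    exact hψle K x
  have hψtend : Tendsto (fun K => ∫ x, ψ K x ∂μ) atTop (nhds 0) := by
    have h0 : (0 : ℝ) = ∫ _ : X, (0 : ℝ) ∂μ := by simp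
    rw [h0]
    refine tendsto_integral_of_dominated_convergence (fun x => |φ x|)
      (fun K => (hψmeas K).aestronglyMeasurable) hφ.abs ?_ ?_
    · intro K
      refine Filter.Eventually.of_forall fun x => ?_
      rw [Real.norm_eq_abs, abs_of_nonneg (hψnonneg K x)]
      exact hψle K x
    · refine Filter.Eventually.of_forall fun x => ?_
      have hev : ∀ᶠ K : ℕ in atTop, ψ K x = 0 := by
        filter_upwards [eventually_ge_atTop ⌈|φ x|⌉₊] with K hK
        simp only [hψdef]
        rw [if_neg (not_lt.2 (le_trans (Nat.le_ceil _) (by exact_mod_cast hK)))]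
      exact Tendsto.congr' (hev.mono fun K hK => hK.symm) tendsto_const_nhds
  -- uniform bound for the error term
  have habs : ∀ n K : ℕ, |∫ x, e n x ∂μ|
      ≤ (∫ x, ψ K x ∂μ) + (K : ℝ) * (μ (C n)).toReal := by
    intro n K
    have h1 : |∫ x, e n x ∂μ| ≤ ∫ x, |e n x| ∂μ := by
      simpa [Real.norm_eq_abs] using norm_integral_le_integral_norm (μ := μ) (e n)
    have h2 : ∀ x, |e n x| ≤ ψ K (T^[n] x) + (C n).indicator (fun _ => (K : ℝ)) x := by
      intro x
      by_cases hx : x ∈ C n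
      · simp only [he]
        rw [indicator_of_mem hx, indicator_of_mem hx]
        simp only [hψdef]
        split_ifs with hcase
        · have : (0:ℝ) ≤ (K : ℝ) := Nat.cast_nonneg K
          linarith
        · push_neg at hcase
          have : (0:ℝ) ≤ (K : ℝ) := Nat.cast_nonneg K
          linarith
      · simp only [he]
        rw [indicator_of_notMem hx, indicator_of_notMem hx]
        simpa using hψnonneg K (T^[n] x)
    have hintψT : Integrable (fun x => ψ K (T^[n] x)) μ := by
      have h3 : Integrable (ψ K) (Measure.map T^[n] μ) := by
        rw [(hT.iterate n).map_eq]
        exact hψint K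
      exact h3.comp_measurable (hT.measurable.iterate n)
    have hintCK : Integrable ((C n).indicator (fun _ => (K : ℝ))) μ :=
      (integrable_const _).indicator (hCmeas n)
    have h3 : ∫ x, |e n x| ∂μ
        ≤ ∫ x, (ψ K (T^[n] x) + (C n).indicator (fun _ => (K : ℝ)) x) ∂μ :=
      integral_mono (hinte n).abs (hintψT.add hintCK) h2
    have h4 : ∫ x, (ψ K (T^[n] x) + (C n).indicator (fun _ => (K : ℝ)) x) ∂μ
        = (∫ x, ψ K x ∂μ) + (K : ℝ) * (μ (C n)).toReal := by
      rw [integral_add hintψT hintCK]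
      congr 1
      · have h5 := integral_map (μ := μ) (hT.iterate n).aemeasurable
          (f := ψ K) ((hψmeas K).aestronglyMeasurable)
        rw [(hT.iterate n).map_eq] at h5
        exact h5.symm
      · rw [integral_indicator_const _ (hCmeas n), smul_eq_mul, mul_comm]; rfl
    rw [h4] at h3
    exact le_trans h1 h3
  -- the error term tends to zero
  have hε : Tendsto (fun n => ∫ x, e n x ∂μ) atTop (nhds 0) := by
    refine Metric.tendsto_atTop.2 fun δ hδ => ?_
    obtain ⟨K, hK⟩ := (hψtend.eventually (gt_mem_nhds (half_pos hδ))).exists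
    have hmul : Tendsto (fun n => ((K : ℝ) + 1) * (μ (C n)).toReal) atTop (nhds 0) := by
      have := hC0'.const_mul ((K : ℝ) + 1)
      simpa using this
    obtain ⟨N, hN⟩ := eventually_atTop.1 (hmul.eventually (gt_mem_nhds (half_pos hδ)))
    refine ⟨N, fun n hn => ?_⟩
    rw [Real.dist_eq, sub_zero]
    have h1 := habs n K
    have h2 : (K : ℝ) * (μ (C n)).toReal ≤ ((K : ℝ) + 1) * (μ (C n)).toReal := by
      have h3 : (0:ℝ) ≤ (μ (C n)).toReal := ENNReal.toReal_nonneg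
      nlinarith
    have h4 := hN n hn
    calc |∫ x, e n x ∂μ| ≤ (∫ x, ψ K x ∂μ) + (K : ℝ) * (μ (C n)).toReal := h1
      _ < δ / 2 + δ / 2 := by
          have := lt_of_le_of_lt h2 h4
          linarith
      _ = δ := by ring
  -- conclusion
  have hfin : ∀ n, c * (μ B).toReal ≤ (∫ x, φ x ∂μ) - ∫ x, e n x ∂μ := by
    intro n
    have h1 := hkey n
    have h2 := hlow n
    linarith
  have hlim : Tendsto (fun n => (∫ x, φ x ∂μ) - ∫ x, e n x ∂μ) atTop
      (nhds ((∫ x, φ x ∂μ) - 0)) := tendsto_const_nhds.sub hε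
  have hge : c * (μ B).toReal ≤ (∫ x, φ x ∂μ) - 0 := ge_of_tendsto' hlim hfin
  have htR : 0 < (μ B).toReal := ENNReal.toReal_pos (ne_of_gt hmB) (measure_ne_top μ B)
  have hpos : 0 < c * (μ B).toReal := mul_pos hcpos htR
  linarith

/-- If `T` preserves a probability measure `μ`, `φ` is integrable and the Birkhoff sums
`∑_{j<n} φ(T^j x)` tend to `+∞` for `μ`-almost every `x`, then `∫ φ dμ > 0`. -/
theorem stmt_1 {X : Type*} [MeasurableSpace X] (μ : Measure X) [IsProbabilityMeasure μ]
    (T : X → X) (hT : MeasurePreserving T μ μ)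
    (φ : X → ℝ) (hφ : Integrable φ μ)
    (h : ∀ᵐ x ∂μ, Tendsto (fun n => ∑ j ∈ Finset.range n, φ (T^[j] x)) atTop atTop) :
    0 < ∫ x, φ x ∂μ := by
  set g : X → ℝ := hφ.1.mk φ with hg
  have hgm : Measurable g := hφ.1.stronglyMeasurable_mk.measurable
  have hφg : φ =ᵐ[μ] g := hφ.1.ae_eq_mk
  have hgint : Integrable g μ := hφ.congr hφg
  have hiter : ∀ j : ℕ, (fun x => φ (T^[j] x)) =ᵐ[μ] fun x => g (T^[j] x) := by
    intro j
    exact ae_eq_comp (f := T^[j]) (hT.iterate j).measurable.aemeasurable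
      (g := φ) (g' := g) (by rwa [(hT.iterate j).map_eq])
  have hg' : ∀ᵐ x ∂μ, Tendsto (fun n => ∑ j ∈ Finset.range n, g (T^[j] x)) atTop atTop := by
    have hall : ∀ᵐ x ∂μ, ∀ j : ℕ, φ (T^[j] x) = g (T^[j] x) := ae_all_iff.2 hiter
    filter_upwards [h, hall] with x hx hxall
    have heq : (fun n => ∑ j ∈ Finset.range n, φ (T^[j] x))
        = fun n => ∑ j ∈ Finset.range n, g (T^[j] x) := by
      funext n; exact Finset.sum_congr rfl fun j _ => hxall j
    rwa [heq] at hx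
  have hres := stmt_1_aux μ T hT g hgint hgm hg'
  rwa [integral_congr_ae hφg]
end

section
/- Let M be a normal topological space with a regular σ-finite Borel measure μ, N a geodesically convex metric space with base point 0̂, and s : M → N a simple map. Then for every ε > 0 there exists a continuous map f : M → N with ∫ dist_N(f(x),s(x)) dμ(x) ≤ ε. -/
open MeasureTheory Set
open scoped ENNReal

/-- A simple map: takes finitely many values `v i` on pairwise disjoint measurable sets
`A i` of finite measure and equals the base point `o` elsewhere. -/
def IsSimpleMapTo {M N : Type*} [MeasurableSpace M] (μ : Measure M)
    (o : N) (s : M → N) : Prop :=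
  ∃ (k : ℕ) (v : Fin k → N) (A : Fin k → Set M),
    (∀ i, MeasurableSet (A i)) ∧
    (Pairwise fun i j => Disjoint (A i) (A j)) ∧
    (∀ i, μ (A i) < ⊤) ∧
    (∀ i, ∀ x ∈ A i, s x = v i) ∧
    (∀ x, x ∉ ⋃ i, A i → s x = o)

/-- In a σ-finite outer regular measure space, any measurable set contains a closed subset
with arbitrarily small complement inside it. -/
lemma exists_isClosed_subset_diff_le {M : Type*} [TopologicalSpace M] [MeasurableSpace M]
    [OpensMeasurableSpace M] (μ : Measure M) [SigmaFinite μ] [μ.OuterRegular]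
    {A : Set M} (hA : MeasurableSet A) {ε : ℝ≥0∞} (hε : ε ≠ 0) :
    ∃ F, F ⊆ A ∧ IsClosed F ∧ μ (A \ F) ≤ ε := by
  obtain ⟨δ, δpos, hδ⟩ := ENNReal.exists_pos_sum_of_countable' hε ℕ
  have hB : ∀ n, MeasurableSet (Aᶜ ∩ spanningSets μ n) := fun n =>
    hA.compl.inter (measurableSet_spanningSets μ n)
  have hBfin : ∀ n, μ (Aᶜ ∩ spanningSets μ n) ≠ ∞ := fun n =>
    ((measure_mono inter_subset_right).trans_lt (measure_spanningSets_lt_top μ n)).ne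
  choose W hWsub hWopen _ hWlt using fun n => (hB n).exists_isOpen_diff_lt (hBfin n) (δpos n).ne'
  have hcover : Aᶜ ⊆ ⋃ n, W n := by
    intro x hx
    have : x ∈ ⋃ n, spanningSets μ n := by
      rw [iUnion_spanningSets]; trivial
    obtain ⟨_, ⟨n, rfl⟩, hn⟩ := this
    exact mem_iUnion.2 ⟨n, hWsub n ⟨hx, hn⟩⟩
  refine ⟨(⋃ n, W n)ᶜ, ?_, (isOpen_iUnion hWopen).isClosed_compl, ?_⟩
  · exact compl_subset_comm.mp hcover
  · have h1 : A \ (⋃ n, W n)ᶜ = ⋃ n, A ∩ W n := by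
      rw [diff_compl, inter_iUnion]
    calc μ (A \ (⋃ n, W n)ᶜ) ≤ ∑' n, μ (A ∩ W n) := by rw [h1]; exact measure_iUnion_le _
      _ ≤ ∑' n, δ n := by
          refine ENNReal.tsum_le_tsum fun n => le_trans (measure_mono ?_) (hWlt n).le
          intro x hx
          exact ⟨hx.2, fun hxB => hxB.1 hx.1⟩
      _ ≤ ε := hδ.le

/-- Any simple map `s : M → N`, with `M` a normal topological space with a regular σ-finite
Borel measure and `N` a geodesically convex metric space with base point `o`, is approximated
in `L¹` by continuous maps: for every `ε > 0` there is a continuous `f : M → N` with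
`∫ dist(f x, s x) dμ ≤ ε`. -/
theorem stmt_4 {M N : Type*} [TopologicalSpace M] [NormalSpace M]
    [MeasurableSpace M] [BorelSpace M]
    (μ : Measure M) [SigmaFinite μ] [μ.Regular]
    [MetricSpace N] (o : N)
    (hconv : ∃ τ : ℝ, 1 ≤ τ ∧ ∀ u v : N, ∃ γ : ℝ → N,
      ContinuousOn γ (Icc 0 1) ∧ γ 0 = u ∧ γ 1 = v ∧
      ∀ s' ∈ Icc (0:ℝ) 1, ∀ t ∈ Icc (0:ℝ) 1, dist (γ s') (γ t) ≤ τ * dist u v)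
    (s : M → N) (hs : IsSimpleMapTo μ o s)
    (ε : ℝ) (hε : 0 < ε) :
    ∃ f : M → N, Continuous f ∧
      ∫⁻ x, ENNReal.ofReal (dist (f x) (s x)) ∂μ ≤ ENNReal.ofReal ε := by
  classical
  obtain ⟨τ, hτ, hγex⟩ := hconv
  obtain ⟨k, v, A, hAm, hAd, hAfin, hval, hout⟩ := hs
  choose γ hγc hγ0 hγ1 hγd using fun i : Fin k => hγex o (v i)
  set S : ℝ := ∑ i, dist o (v i) with hSdef
  have hS0 : 0 ≤ S := Finset.sum_nonneg fun i _ => dist_nonneg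
  have hSle : ∀ i : Fin k, dist o (v i) ≤ S := fun i =>
    Finset.single_le_sum (fun j _ => dist_nonneg) (Finset.mem_univ i)
  set C : ℝ := (τ + 1) * S with hCdef
  have hC0 : 0 ≤ C := mul_nonneg (by linarith) hS0
  set δ : ℝ := ε / (2 * (k + 1) * (C + 1)) with hδdef
  have hk0 : (0:ℝ) ≤ k := Nat.cast_nonneg k
  have hδpos : 0 < δ := by positivity
  have hδ0 : ENNReal.ofReal δ ≠ 0 := by
    simp [ENNReal.ofReal_eq_zero, not_le, hδpos]
  -- closed sets inside the A i
  choose F hFA hFcl hFsmall using fun i =>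
    exists_isClosed_subset_diff_le μ (hAm i) (ε := ENNReal.ofReal δ) hδ0
  have hFfin : ∀ i, μ (F i) ≠ ∞ :=
    fun i => ((measure_mono (hFA i)).trans_lt (hAfin i)).ne
  -- open sets slightly bigger than the F i
  choose V hFV hVopen _ hVsmall using fun i =>
    (hFcl i).measurableSet.exists_isOpen_diff_lt (hFfin i) hδ0
  -- the F i are pairwise disjoint
  have hFd : Pairwise fun i j => Disjoint (F i) (F j) :=
    fun i j hij => (hAd hij).mono (hFA i) (hFA j)
  -- separate them by open sets
  have hsep : ∀ i : Fin k, ∃ P Q : Set M, IsOpen P ∧ IsOpen Q ∧ F i ⊆ P ∧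
      (⋃ j ∈ Finset.univ.erase i, F j) ⊆ Q ∧ Disjoint P Q := by
    intro i
    have hGcl : IsClosed (⋃ j ∈ Finset.univ.erase i, F j) :=
      isClosed_biUnion_finset fun j _ => hFcl j
    have hdisj : Disjoint (F i) (⋃ j ∈ Finset.univ.erase i, F j) := by
      refine disjoint_iUnion₂_right.mpr fun j hj => hFd ?_
      exact fun h => (Finset.mem_erase.mp hj).1 h.symm
    obtain ⟨P, Q, hPo, hQo, hFP, hGQ, hPQ⟩ := NormalSpace.normal _ _ (hFcl i) hGcl hdisj
    exact ⟨P, Q, hPo, hQo, hFP, hGQ, hPQ⟩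
  choose P Q hPo hQo hFP hGQ hPQ using hsep
  -- pairwise disjoint open sets U i with F i ⊆ U i ⊆ V i
  set U : Fin k → Set M := fun i => V i ∩ P i ∩ ⋂ j ∈ Finset.univ.erase i, Q j with hUdef
  have hUo : ∀ i, IsOpen (U i) := fun i =>
    ((hVopen i).inter (hPo i)).inter (isOpen_biInter_finset fun j _ => hQo j)
  have hFU : ∀ i, F i ⊆ U i := by
    intro i x hx
    refine ⟨⟨hFV i hx, hFP i hx⟩, ?_⟩
    simp only [mem_iInter]
    intro j hj
    refine hGQ j ?_
    have hij : i ∈ Finset.univ.erase j := by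
      simp only [Finset.mem_erase, Finset.mem_univ, and_true]
      exact fun h => (Finset.mem_erase.mp hj).1 h.symm
    exact mem_biUnion hij hx
  have hUV : ∀ i, U i ⊆ V i := fun i => (inter_subset_left.trans inter_subset_left)
  have hUd : Pairwise fun i j => Disjoint (U i) (U j) := by
    intro i j hij
    refine Disjoint.mono ?_ ?_ (hPQ j).symm
    · intro x hx
      have := hx.2
      simp only [mem_iInter] at this
      exact this j (Finset.mem_erase.mpr ⟨hij.symm, Finset.mem_univ j⟩)
    · exact inter_subset_left.trans inter_subset_right
  -- Urysohn functions
  have hUry : ∀ i : Fin k, ∃ φ : C(M, ℝ), EqOn φ 0 (U i)ᶜ ∧ EqOn φ 1 (F i) ∧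
      ∀ x, φ x ∈ Icc (0:ℝ) 1 := by
    intro i
    refine exists_continuous_zero_one_of_isClosed (hUo i).isClosed_compl (hFcl i) ?_
    exact disjoint_left.mpr fun x hx hxF => hx (hFU i hxF)
  choose φ hφ0 hφ1 hφIcc using hUry
  -- definition of f
  set f : M → N := fun x => if h : ∃ i, x ∈ U i then γ h.choose (φ h.choose x) else o
    with hfdef
  have hchoose : ∀ {i x}, x ∈ U i → ∀ (h : ∃ j, x ∈ U j), h.choose = i := by
    intro i x hx h
    by_contra hne
    exact (hUd hne).ne_of_mem h.choose_spec hx rfl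
  have hfU : ∀ i, ∀ x ∈ U i, f x = γ i (φ i x) := by
    intro i x hx
    have h : ∃ j, x ∈ U j := ⟨i, hx⟩
    simp only [hfdef, dif_pos h, hchoose hx h]
  have hfnot : ∀ x, (∀ i, x ∉ U i) → f x = o := by
    intro x hx
    simp only [hfdef, dif_neg (fun h : ∃ i, x ∈ U i => hx h.choose h.choose_spec)]
  have hcomp : ∀ i, Continuous fun x => γ i (φ i x) := fun i =>
    (hγc i).comp_continuous (φ i).continuous (fun x => hφIcc i x)
  -- continuity of f
  have hfcont : Continuous f := by
    rw [continuous_iff_continuousAt]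
    intro x
    by_cases hx : ∃ i, x ∈ U i
    · obtain ⟨i, hxi⟩ := hx
      refine (hcomp i).continuousAt.congr ?_
      exact Filter.eventuallyEq_of_mem ((hUo i).mem_nhds hxi) fun y hy => (hfU i y hy).symm
    · have hfx : f x = o := hfnot x fun i hxi => hx ⟨i, hxi⟩
      rw [ContinuousAt, hfx]
      rw [tendsto_iff_dist_tendsto_zero]
      have hbound : ∀ y, dist (f y) o ≤ ∑ i, dist (γ i (φ i y)) o := by
        intro y
        by_cases hy : ∃ i, y ∈ U i
        · obtain ⟨j, hyj⟩ := hy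
          rw [hfU j y hyj]
          exact Finset.single_le_sum (f := fun i => dist (γ i (φ i y)) o)
            (fun i _ => dist_nonneg) (Finset.mem_univ j)
        · rw [hfnot y fun i hyi => hy ⟨i, hyi⟩, dist_self]
          exact Finset.sum_nonneg fun i _ => dist_nonneg
      have hgont : Continuous fun y => ∑ i, dist (γ i (φ i y)) o :=
        continuous_finset_sum _ fun i _ => (hcomp i).dist continuous_const
      have hgx : (∑ i, dist (γ i (φ i x)) o) = 0 := by
        refine Finset.sum_eq_zero fun i _ => ?_
        have : φ i x = 0 := hφ0 i (fun hxU => hx ⟨i, hxU⟩)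
        rw [this, hγ0 i, dist_self]
      have := hgont.tendsto x
      rw [hgx] at this
      exact squeeze_zero (fun y => dist_nonneg) hbound this
  refine ⟨f, hfcont, ?_⟩
  -- the bad set
  set Bad : Set M := (⋃ i, (U i \ F i)) ∪ ⋃ i, (A i \ F i) with hBaddef
  have hBadm : MeasurableSet Bad :=
    (MeasurableSet.iUnion fun i => (hUo i).measurableSet.diff (hFcl i).measurableSet).union
      (MeasurableSet.iUnion fun i => (hAm i).diff (hFcl i).measurableSet)
  have hfs_eq : ∀ x ∉ Bad, f x = s x := by
    intro x hx
    simp only [hBaddef, mem_union, mem_iUnion, not_or, not_exists] at hx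
    obtain ⟨hxU, hxA⟩ := hx
    by_cases hxu : ∃ i, x ∈ U i
    · obtain ⟨i, hxi⟩ := hxu
      have hxF : x ∈ F i := by
        by_contra hxF
        exact hxU i ⟨hxi, hxF⟩
      rw [hfU i x hxi, hφ1 i hxF, Pi.one_apply, hγ1 i, hval i x (hFA i hxF)]
    · rw [hfnot x fun i hxi => hxu ⟨i, hxi⟩]
      have : x ∉ ⋃ i, A i := by
        rw [mem_iUnion]
        rintro ⟨i, hxAi⟩
        have hxF : x ∈ F i := by
          by_contra hxF
          exact hxA i ⟨hxAi, hxF⟩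
        exact hxu ⟨i, hFU i hxF⟩
      rw [hout x this]
  -- uniform bound
  have hb : ∀ x, dist (f x) (s x) ≤ C := by
    intro x
    have h1 : dist (f x) o ≤ τ * S := by
      by_cases hxu : ∃ i, x ∈ U i
      · obtain ⟨j, hxj⟩ := hxu
        rw [hfU j x hxj]
        have := hγd j (φ j x) (hφIcc j x) 0 (by constructor <;> norm_num)
        rw [hγ0 j] at this
        calc dist (γ j (φ j x)) o ≤ τ * dist o (v j) := this
          _ ≤ τ * S := by
              have h0τ : (0:ℝ) ≤ τ := by linarith
              exact mul_le_mul_of_nonneg_left (hSle j) h0τ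
      · rw [hfnot x fun i hxi => hxu ⟨i, hxi⟩, dist_self]
        positivity
    have h2 : dist o (s x) ≤ S := by
      by_cases hxA : x ∈ ⋃ i, A i
      · obtain ⟨_, ⟨i, rfl⟩, hxAi⟩ := hxA
        rw [hval i x hxAi]
        exact hSle i
      · rw [hout x hxA, dist_self]
        exact hS0
    calc dist (f x) (s x) ≤ dist (f x) o + dist o (s x) := dist_triangle _ _ _
      _ ≤ τ * S + S := add_le_add h1 h2
      _ = C := by rw [hCdef]; ring
  -- integral estimate
  have hle : ∀ x, ENNReal.ofReal (dist (f x) (s x)) ≤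
      Bad.indicator (fun _ => ENNReal.ofReal C) x := by
    intro x
    by_cases hx : x ∈ Bad
    · rw [indicator_of_mem hx]
      exact ENNReal.ofReal_le_ofReal (hb x)
    · rw [indicator_of_notMem hx, hfs_eq x hx, dist_self]
      simp
  have hμBad : μ Bad ≤ (2 * k : ℝ≥0∞) * ENNReal.ofReal δ := by
    have h1 : μ (⋃ i, (U i \ F i)) ≤ (k : ℝ≥0∞) * ENNReal.ofReal δ := by
      refine (measure_iUnion_le _).trans ?_
      rw [tsum_fintype]
      calc ∑ i, μ (U i \ F i) ≤ ∑ _i : Fin k, ENNReal.ofReal δ := by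
            refine Finset.sum_le_sum fun i _ => ?_
            exact le_trans (measure_mono (diff_subset_diff_left (hUV i))) (hVsmall i).le
        _ = (k : ℝ≥0∞) * ENNReal.ofReal δ := by
            simp [Finset.sum_const, nsmul_eq_mul]
    have h2 : μ (⋃ i, (A i \ F i)) ≤ (k : ℝ≥0∞) * ENNReal.ofReal δ := by
      refine (measure_iUnion_le _).trans ?_
      rw [tsum_fintype]
      calc ∑ i, μ (A i \ F i) ≤ ∑ _i : Fin k, ENNReal.ofReal δ :=
            Finset.sum_le_sum fun i _ => hFsmall i
        _ = (k : ℝ≥0∞) * ENNReal.ofReal δ := by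
            simp [Finset.sum_const, nsmul_eq_mul]
    calc μ Bad ≤ μ (⋃ i, (U i \ F i)) + μ (⋃ i, (A i \ F i)) := measure_union_le _ _
      _ ≤ (k : ℝ≥0∞) * ENNReal.ofReal δ + (k : ℝ≥0∞) * ENNReal.ofReal δ := add_le_add h1 h2
      _ = (2 * k : ℝ≥0∞) * ENNReal.ofReal δ := by ring
  calc ∫⁻ x, ENNReal.ofReal (dist (f x) (s x)) ∂μ
      ≤ ∫⁻ x, Bad.indicator (fun _ => ENNReal.ofReal C) x ∂μ := lintegral_mono hle
    _ = ENNReal.ofReal C * μ Bad := by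
        rw [lintegral_indicator_const hBadm]
    _ ≤ ENNReal.ofReal C * ((2 * k : ℝ≥0∞) * ENNReal.ofReal δ) := by gcongr
    _ = ENNReal.ofReal (C * (2 * k * δ)) := by
        rw [ENNReal.ofReal_mul hC0, ENNReal.ofReal_mul (by positivity : (0:ℝ) ≤ 2 * (k:ℝ))]
        norm_num [ENNReal.ofReal_mul, ENNReal.ofReal_natCast]
    _ ≤ ENNReal.ofReal ε := by
        refine ENNReal.ofReal_le_ofReal ?_
        have hden : (0:ℝ) < 2 * ((k:ℝ) + 1) * (C + 1) := by positivity
        have h1 : C * (2 * (k:ℝ) * δ) = (C * 2 * k * ε) / (2 * ((k:ℝ) + 1) * (C + 1)) := by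
          rw [hδdef]; ring
        rw [h1, div_le_iff₀ hden]
        nlinarith [mul_nonneg hε.le hk0, mul_nonneg hε.le hC0,
          mul_nonneg (mul_nonneg hε.le hk0) hC0]
end

section
/- Let (N, 𝔅, η) be a Lebesgue probability space, g : N → N a measurable map preserving η, and {η_y : y ∈ N} the disintegration of η with respect to the partition into preimages {g^{-1}(y) : y ∈ N}. Let G(x,v) = (g(x), G_x(v)) be a measurable skew product on N × L and m a probability on N × L projecting to η with fiber disintegration {m_x}. Then m is G-invariant if and only if m_x = ∫ (G_z)_* m_z dη_x(z) for η-almost every x ∈ N. -/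
open MeasureTheory ProbabilityTheory
open scoped ENNReal

/-- For a measure-preserving `g` on a Lebesgue probability space, with `{κ y}` the
disintegration of `η` over the partition into preimages `g⁻¹(y)`, and a measurable skew
product `G(x,v) = (g x, G_x v)` on `N × L`, a probability `m` on `N × L` projecting to `η`
with fiber disintegration `x ↦ m.condKernel x` is `G`-invariant if and only if
`m_x = ∫ (G_z)_* m_z dκ_x(z)` for `η`-almost every `x`. -/
theorem stmt_6 {N L : Type*} [MeasurableSpace N] [StandardBorelSpace N]
    [MeasurableSpace L] [StandardBorelSpace L] [Nonempty L]
    (η : Measure N) [IsProbabilityMeasure η]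
    (g : N → N) (hg : Measurable g) (hpres : MeasurePreserving g η η)
    (κ : N → Measure N) (hκmeas : Measurable κ)
    (hκprob : ∀ y, IsProbabilityMeasure (κ y))
    (hκsupp : ∀ y, κ y (g ⁻¹' {y}) = 1)
    (hκdis : ∀ φ : N → ℝ≥0∞, Measurable φ →
      ∫⁻ z, φ z ∂η = ∫⁻ x, ∫⁻ z, φ z ∂(κ (g x)) ∂η)
    (G : N → L → L) (hG : Measurable (Function.uncurry G))
    (m : Measure (N × L)) [IsProbabilityMeasure m] (hfst : m.fst = η) :
    Measure.map (fun p : N × L => (g p.1, G p.1 p.2)) m = m ↔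
      ∀ᵐ x ∂η, m.condKernel x =
        Measure.bind (κ x) (fun z => Measure.map (G z) (m.condKernel z)) := by
  classical
  set κK : Kernel N N := ⟨κ, hκmeas⟩ with hκK
  haveI : IsMarkovKernel κK := ⟨fun a => hκprob a⟩
  set ρ : Kernel N L := Kernel.map (Kernel.id ×ₖ m.condKernel) (Function.uncurry G) with hρ
  haveI : IsMarkovKernel ρ := Kernel.IsMarkovKernel.map _ hG
  have hρ_apply : ∀ z, ρ z = Measure.map (G z) (m.condKernel z) := by
    intro z
    rw [hρ, Kernel.map_apply _ hG, Kernel.prod_apply, Kernel.id_apply,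
      Measure.dirac_prod, Measure.map_map hG measurable_prodMk_left]
    rfl
  set ν : Kernel N L := ρ ∘ₖ κK with hν
  have hν_apply : ∀ x, ν x = Measure.bind (κ x)
      (fun z => Measure.map (G z) (m.condKernel z)) := by
    intro x
    rw [hν, Kernel.comp_apply]
    exact congrArg (Measure.bind (κ x)) (funext hρ_apply)
  have hm : η ⊗ₘ m.condKernel = m := by rw [← hfst]; exact m.disintegrate m.condKernel
  have hF : Measurable (fun p : N × L => (g p.1, G p.1 p.2)) :=
    (hg.comp measurable_fst).prodMk hG
  have key : Measure.map (fun p : N × L => (g p.1, G p.1 p.2)) m = η ⊗ₘ ν := by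
    haveI : IsProbabilityMeasure (Measure.map (fun p : N × L => (g p.1, G p.1 p.2)) m) :=
      Measure.isProbabilityMeasure_map hF.aemeasurable
    refine ext_of_generate_finite _ generateFrom_prod.symm isPiSystem_prod ?_ (by simp)
    rintro _ ⟨A, hA, B, hB, rfl⟩
    simp only [Set.mem_setOf_eq] at hA hB
    have hρB : Measurable fun x => ρ x B := ρ.measurable_coe hB
    have step1 : Measure.map (fun p : N × L => (g p.1, G p.1 p.2)) m (A ×ˢ B)
        = ∫⁻ x, (g ⁻¹' A).indicator (fun x => ρ x B) x ∂η := by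
      rw [Measure.map_apply hF (hA.prod hB), ← hm,
        Measure.compProd_apply (hF (hA.prod hB))]
      refine lintegral_congr fun x => ?_
      by_cases hx : g x ∈ A
      · have : (Prod.mk x ⁻¹' ((fun p : N × L => (g p.1, G p.1 p.2)) ⁻¹' A ×ˢ B))
            = G x ⁻¹' B := by
          ext v; simp [hx]
        rw [this, Set.indicator_of_mem (show x ∈ g ⁻¹' A from hx), hρ_apply,
          Measure.map_apply (hG.of_uncurry_left) hB]
      · have : (Prod.mk x ⁻¹' ((fun p : N × L => (g p.1, G p.1 p.2)) ⁻¹' A ×ˢ B))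
            = (∅ : Set L) := by
          ext v; simp [hx]
        rw [this, Set.indicator_of_notMem (show x ∉ g ⁻¹' A from hx)]
        simp
    have step2 : ∫⁻ x, (g ⁻¹' A).indicator (fun x => ρ x B) x ∂η
        = ∫⁻ x, ∫⁻ z, (g ⁻¹' A).indicator (fun z => ρ z B) z ∂(κ (g x)) ∂η :=
      hκdis _ (hρB.indicator (hg hA))
    have step3 : ∀ x, ∫⁻ z, (g ⁻¹' A).indicator (fun z => ρ z B) z ∂(κ (g x))
        = A.indicator (fun y => ν y B) (g x) := by
      intro x
      have hae : ∀ᵐ z ∂(κ (g x)), g z = g x := by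
        have := hκsupp (g x)
        rw [ae_iff]
        have hcompl : {z | ¬ g z = g x} = (g ⁻¹' {g x})ᶜ := by ext z; simp
        rw [hcompl, measure_compl (hg (measurableSet_singleton _)) (by simp), this]
        simp
      have : ∫⁻ z, (g ⁻¹' A).indicator (fun z => ρ z B) z ∂(κ (g x))
          = ∫⁻ z, A.indicator (fun _ => ρ z B) (g x) ∂(κ (g x)) := by
        refine lintegral_congr_ae ?_
        filter_upwards [hae] with z hz
        by_cases h : g x ∈ A
        · rw [Set.indicator_of_mem h,
            Set.indicator_of_mem (show z ∈ g ⁻¹' A by simp [hz, h])]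
        · rw [Set.indicator_of_notMem h,
            Set.indicator_of_notMem (show z ∉ g ⁻¹' A by simp [hz, h])]
      rw [this]
      by_cases h : g x ∈ A
      · simp only [Set.indicator_of_mem h]
        rw [hν, Kernel.comp_apply' _ _ _ hB]
        rfl
      · simp [Set.indicator_of_notMem h]
    have step4 : ∫⁻ x, A.indicator (fun y => ν y B) (g x) ∂η
        = ∫⁻ y, A.indicator (fun y => ν y B) y ∂η :=
      hpres.lintegral_comp ((ν.measurable_coe hB).indicator hA)
    rw [step1, step2]
    simp_rw [step3]
    rw [step4, Measure.compProd_apply_prod hA hB, ← lintegral_indicator hA]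
  constructor
  · intro h
    have hm2 : m = m.fst ⊗ₘ ν := by rw [hfst, ← key, h]
    have hcond := eq_condKernel_of_measure_eq_compProd ν hm2
    rw [hfst] at hcond
    filter_upwards [hcond] with x hx
    rw [← hx, hν_apply]
  · intro h
    have hcong : ⇑ν =ᵐ[η] ⇑m.condKernel := by
      filter_upwards [h] with x hx
      rw [hν_apply, ← hx]
    rw [key, Measure.compProd_congr hcong, hm]
end
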